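/- Let T_I ≠ T_F be plane spanning trees of a finite point set P in convex position such that every edge of T_F ∖ T_I is crossed by at least two edges of T_I. Then in every flip sequence from T_I to T_F, the first flip inserts an edge not belonging to T_F, i.e., the first flip is a parking flip. -/
import Mathlib


open scoped Classical

noncomputable section

/-- A point in the plane. -/
abbrev Point : Type := ℝ × ℝ

/-- An edge: an unordered pair of points. -/
abbrev Edge : Type := Sym2 Point

/-- The closed straight-line segment spanned by an edge. -/
def seg : Edge → Set Point :=
  Sym2.lift ⟨fun u v => segment ℝ u v, fun u v => segment_symm ℝ u v⟩

/-- Two edges cross if they are distinct and their segments intersect in a point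
that is not a common endpoint of the two edges. -/
def Crosses (e f : Edge) : Prop :=
  e ≠ f ∧ ∃ p : Point, p ∈ seg e ∧ p ∈ seg f ∧ ¬(p ∈ e ∧ p ∈ f)

/-- A finite point set is in convex position if no point lies in the convex hull
of the other points. -/
def ConvexPos (P : Finset Point) : Prop :=
  ∀ p ∈ P, p ∉ convexHull ℝ ((P : Set Point) \ {p})

/-- The cross product (signed area) determining on which side of the oriented
line through `p` and `q` the point `r` lies. -/
def crossProd (p q r : Point) : ℝ :=
  (q.1 - p.1) * (r.2 - p.2) - (q.2 - p.2) * (r.1 - p.1)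

/-- `e` is a convex hull edge of `P`: `e = uv` with `u, v ∈ P` distinct and all
other points of `P` strictly on one side of the line through `u` and `v`. -/
def IsHullEdge (P : Finset Point) (e : Edge) : Prop :=
  ∃ u v : Point, e = s(u, v) ∧ u ∈ P ∧ v ∈ P ∧ u ≠ v ∧
    ((∀ w ∈ P, w ≠ u → w ≠ v → 0 < crossProd u v w) ∨
     (∀ w ∈ P, w ≠ u → w ≠ v → crossProd u v w < 0))

/-- A diagonal of `P`: a nondegenerate edge between points of `P` that is not a
convex hull edge. -/
def IsDiagonal (P : Finset Point) (e : Edge) : Prop :=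
  (∀ p ∈ e, p ∈ P) ∧ ¬e.IsDiag ∧ ¬IsHullEdge P e

/-- `T` is a plane (non-crossing) spanning tree of `P`: the endpoints of the
edges lie in `P`, no edge is a loop, there are `|P| - 1` edges, any two points
of `P` are connected by edges of `T`, and the edges are pairwise non-crossing. -/
structure IsPST (P : Finset Point) (T : Finset Edge) : Prop where
  endpoints_mem : ∀ e ∈ T, ∀ p ∈ e, p ∈ P
  not_loop : ∀ e ∈ T, ¬e.IsDiag
  card_eq : T.card + 1 = P.card
  connected : ∀ u ∈ P, ∀ v ∈ P, Relation.ReflTransGen (fun a b => s(a, b) ∈ T) u v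
  noncrossing : ∀ e ∈ T, ∀ f ∈ T, ¬Crosses e f

/-- A flip from `T` to `T'` removing the edge `e` and adding the edge `f`. -/
def IsFlip (P : Finset Point) (T T' : Finset Edge) (e f : Edge) : Prop :=
  IsPST P T ∧ IsPST P T' ∧ e ∈ T ∧ f ∉ T ∧ T' = insert f (T.erase e)

/-- `S 0, S 1, …, S k` is a flip sequence of plane spanning trees of `P`. -/
def IsFlipSeq (P : Finset Point) (k : ℕ) (S : ℕ → Finset Edge) : Prop :=
  (∀ i ≤ k, IsPST P (S i)) ∧ ∀ i < k, ∃ e f : Edge, IsFlip P (S i) (S (i + 1)) e f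

/-- `S 0, …, S k` is a flip sequence from `TI` to `TF`. -/
def IsFlipSeqBtw (P : Finset Point) (TI TF : Finset Edge) (k : ℕ)
    (S : ℕ → Finset Edge) : Prop :=
  IsFlipSeq P k S ∧ S 0 = TI ∧ S k = TF

/-- The flip distance between two plane spanning trees of `P`. -/
def flipDist (P : Finset Point) (TI TF : Finset Edge) : ℕ :=
  sInf {k : ℕ | ∃ S : ℕ → Finset Edge, IsFlipSeqBtw P TI TF k S}

/-- `S 0, …, S k` is a shortest flip sequence from `TI` to `TF`. -/
def IsShortest (P : Finset Point) (TI TF : Finset Edge) (k : ℕ)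
    (S : ℕ → Finset Edge) : Prop :=
  IsFlipSeqBtw P TI TF k S ∧ k = flipDist P TI TF

/-- `Trace S k i e tr`: in the flip sequence `S i, S (i+1), …, S k`, the trace of
the edge `e` is the list `tr`. -/
inductive Trace (S : ℕ → Finset Edge) (k : ℕ) : ℕ → Edge → List Edge → Prop
  | last (e : Edge) : Trace S k k e [e]
  | keep {i : ℕ} {e : Edge} {tr : List Edge} :
      i < k → e ∈ S (i + 1) → Trace S k (i + 1) e tr → Trace S k i e tr
  | move {i : ℕ} {e f : Edge} {tr : List Edge} :
      i < k → e ∉ S (i + 1) → f ∈ S (i + 1) → f ∉ S i →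
      Trace S k (i + 1) f tr → Trace S k i e (e :: tr)

/-- The number of flips of the sequence `S 0, …, S k` in which `e` is the
removed edge. -/
def removedCount (e : Edge) (k : ℕ) (S : ℕ → Finset Edge) : ℕ :=
  ((Finset.range k).filter fun i => e ∈ S i ∧ e ∉ S (i + 1)).card


end

/-- If every edge of `TF \ TI` is crossed by at least two edges of `TI`, then
in every flip sequence from `TI` to `TF` the first flip inserts an edge not in
`TF`, i.e. the first flip is a parking flip. -/
theorem stmt_12 (P : Finset Point) (hP : ConvexPos P) (TI TF : Finset Edge)
    (hTI : IsPST P TI) (hTF : IsPST P TF) (hne : TI ≠ TF)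
    (hcross : ∀ f ∈ TF, f ∉ TI →
      ∃ e1 ∈ TI, ∃ e2 ∈ TI, e1 ≠ e2 ∧ Crosses e1 f ∧ Crosses e2 f) :
    ∀ (k : ℕ) (S : ℕ → Finset Edge), IsFlipSeqBtw P TI TF k S → 0 < k →
      ∀ f : Edge, f ∈ S 1 → f ∉ S 0 → f ∉ TF := by
  intro k S hseq hk f hf1 hf0 hfTF
  obtain ⟨⟨hpst, hflips⟩, hS0, hSk⟩ := hseq
  have hf0' : f ∉ TI := hS0 ▸ hf0
  obtain ⟨e1, he1, e2, he2, hne12, hc1, hc2⟩ := hcross f hfTF hf0'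
  obtain ⟨e, f', hPST0, hPST1, heT, hf'T, hS1⟩ := hflips 0 hk
  have key : ∀ g, g ∈ TI → g ≠ e → Crosses g f → False := by
    intro g hgTI hge hcg
    have hgS1 : g ∈ S 1 := by
      rw [show (0:ℕ)+1 = 1 from rfl] at hS1
      rw [hS1]
      exact Finset.mem_insert_of_mem (Finset.mem_erase.mpr ⟨hge, hS0 ▸ hgTI⟩)
    exact (hpst 1 hk).noncrossing g hgS1 f hf1 hcg
  by_cases h1 : e1 = e
  · exact key e2 he2 (fun h => hne12 (h1.trans h.symm)) hc2
  · exact key e1 he1 h1 hc1
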